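/- (Beurling–Lax–Halmos for a pure isometry) Let V be a pure isometry on a Hilbert space H and let M be a closed subspace of H. Then M is invariant under V if and only if there exist a Hilbert space structure on W' = M ⊖ V(M) and an isometry Φ : ⊕_{n≥0} copies-of-W' → H intertwining the shift with V such that M = range Φ. Concretely, M = closure of span{Vⁿ w : n ≥ 0, w ∈ W'} and the subspaces Vⁿ(W') (n ≥ 0) are pairwise orthogonal. -/

import Mathlib

open scoped InnerProductSpace
open Filter Topology

/-- Beurling–Lax–Halmos for a pure isometry: a closed subspace `M` is invariant
under `V` iff `M = ⊕_{n≥0} Vⁿ(W')` where `W' = M ⊖ V(M)`. -/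
theorem beurling_lax_halmos_pure_isometry
    {H : Type*} [NormedAddCommGroup H] [InnerProductSpace ℂ H] [CompleteSpace H]
    (V : H →L[ℂ] H) (hV : ∀ x, ‖V x‖ = ‖x‖)
    (hpure : ∀ x : H, Tendsto (fun n : ℕ => (V ^ n) ((ContinuousLinearMap.adjoint V ^ n) x))
      atTop (𝓝 0))
    (M : Submodule ℂ H) (hM : IsClosed (M : Set H)) :
    let W' := M ⊓ (M.map (V : H →ₗ[ℂ] H))ᗮ
    (∀ x ∈ M, V x ∈ M) ↔
      (M = (⨆ n : ℕ, W'.map ((V ^ n : H →L[ℂ] H) : H →ₗ[ℂ] H)).topologicalClosure ∧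
       ∀ n m : ℕ, n ≠ m → ∀ w ∈ W', ∀ w' ∈ W', ⟪(V ^ n) w, (V ^ m) w'⟫_ℂ = 0) := by
  intro W'
  -- basic facts about the isometry V
  have hinner : ∀ x y : H, ⟪V x, V y⟫_ℂ = ⟪x, y⟫_ℂ :=
    (LinearMap.norm_map_iff_inner_map_map V).mp hV
  have hadj : ∀ x : H, ContinuousLinearMap.adjoint V (V x) = x := by
    have h1 := (ContinuousLinearMap.norm_map_iff_adjoint_comp_self V).mp hV
    intro x
    calc ContinuousLinearMap.adjoint V (V x)
        = (ContinuousLinearMap.adjoint V ∘L V) x := rfl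
      _ = x := by rw [h1]; rfl
  have hpowinner : ∀ (n : ℕ) (x y : H), ⟪(V ^ n) x, (V ^ n) y⟫_ℂ = ⟪x, y⟫_ℂ := by
    intro n
    induction n with
    | zero => simp
    | succ n ih =>
      intro x y
      rw [pow_succ', ContinuousLinearMap.mul_apply, ContinuousLinearMap.mul_apply,
        hinner, ih]
  have hpownorm : ∀ (n : ℕ) (x : H), ‖(V ^ n) x‖ = ‖x‖ := by
    intro n
    induction n with
    | zero => simp
    | succ n ih =>
      intro x
      rw [pow_succ', ContinuousLinearMap.mul_apply, hV, ih]
  have hadjpow : ∀ (n : ℕ) (z : H),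
      (ContinuousLinearMap.adjoint V ^ n) ((V ^ n) z) = z := by
    intro n
    induction n with
    | zero => simp
    | succ n ih =>
      intro z
      rw [pow_succ, ContinuousLinearMap.mul_apply, pow_succ',
        ContinuousLinearMap.mul_apply, hadj, ih]
  set Msup := ⨆ n : ℕ, W'.map ((V ^ n : H →L[ℂ] H) : H →ₗ[ℂ] H) with hMsupdef
  constructor
  · -- forward direction
    intro hinv
    have hMn : ∀ (n : ℕ) (z : H), z ∈ M → (V ^ n) z ∈ M := by
      intro n
      induction n with
      | zero => intro z hz; simpa using hz
      | succ n ih =>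
        intro z hz
        rw [pow_succ', ContinuousLinearMap.mul_apply]
        exact hinv _ (ih z hz)
    have hW'M : W' ≤ M := inf_le_left
    have horth : ∀ (k m : ℕ), k < m → ∀ w ∈ W', ∀ z ∈ M,
        ⟪(V ^ k) w, (V ^ m) z⟫_ℂ = 0 := by
      intro k m hkm w hw z hz
      have h1 : (V ^ m) z = (V ^ k) ((V ^ (m - k)) z) := by
        rw [← ContinuousLinearMap.mul_apply, ← pow_add]
        congr 2
        omega
      rw [h1, hpowinner]
      have hw2 : w ∈ (M.map (V : H →ₗ[ℂ] H))ᗮ := hw.2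
      rw [Submodule.mem_orthogonal'] at hw2
      apply hw2
      have h2 : m - k = (m - k - 1) + 1 := by omega
      rw [h2, pow_succ', ContinuousLinearMap.mul_apply]
      exact ⟨(V ^ (m - k - 1)) z, hMn _ z hz, rfl⟩
    refine ⟨?_, ?_⟩
    · -- M = closure of the span of the Vⁿ W'
      have hisoV : Isometry (V : H → H) := AddMonoidHomClass.isometry_of_norm V hV
      have hVMclosed : IsClosed ((M.map (V : H →ₗ[ℂ] H) : Submodule ℂ H) : Set H) := by
        have h1 : ((M.map (V : H →ₗ[ℂ] H) : Submodule ℂ H) : Set H) = (V : H → H) '' (M : Set H) :=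
          Submodule.map_coe _ _
        rw [h1]
        exact hisoV.isClosedEmbedding.isClosedMap _ hM
      haveI : CompleteSpace (M.map (V : H →ₗ[ℂ] H)) := hVMclosed.completeSpace_coe
      have hVMle : M.map (V : H →ₗ[ℂ] H) ≤ M := by
        intro u hu
        rcases Submodule.mem_map.mp hu with ⟨z, hz, rfl⟩
        exact hinv z hz
      have hdecomp : ∀ u ∈ M, ∃ w ∈ W', ∃ u' ∈ M, u = w + V u' := by
        intro u hu
        have h := Submodule.sup_orthogonal_inf_of_hasOrthogonalProjection hVMle
        rw [← h] at hu
        rcases Submodule.mem_sup.mp hu with ⟨yy, hy, z, hz, hyz⟩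
        rcases Submodule.mem_map.mp hy with ⟨u', hu', rfl⟩
        exact ⟨z, ⟨hz.2, hz.1⟩, u', hu', by rw [← hyz, add_comm]; rfl⟩
      choose wit hwit u' hu'M hdec using hdecomp
      have hsub : Msup.topologicalClosure ≤ M := by
        refine Submodule.topologicalClosure_minimal _ (iSup_le fun n => ?_) hM
        intro u hu
        rcases Submodule.mem_map.mp hu with ⟨ww, hww, rfl⟩
        exact hMn n ww (hW'M hww)
      refine le_antisymm ?_ hsub
      intro x hx
      set xs : ℕ → M := fun n =>
        Nat.rec ⟨x, hx⟩ (fun _ p => ⟨u' p.1 p.2, hu'M p.1 p.2⟩) n with hxsdef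
      set Wn : ℕ → H := fun n => wit (xs n).1 (xs n).2 with hWndef
      set y : ℕ → H := fun n => (V ^ n) ((xs n) : H) with hydef
      have hWnW : ∀ n, Wn n ∈ W' := fun n => hwit _ _
      have hXM : ∀ n, ((xs n) : H) ∈ M := fun n => (xs n).2
      have hxsstep : ∀ n, ((xs n) : H) = Wn n + V ((xs (n + 1)) : H) :=
        fun n => hdec _ _
      have hstep : ∀ n, y n = (V ^ n) (Wn n) + y (n + 1) := by
        intro n
        show (V ^ n) ((xs n : H)) = (V ^ n) (Wn n) + (V ^ (n + 1)) ((xs (n + 1) : H))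
        rw [hxsstep n, map_add, pow_succ, ContinuousLinearMap.mul_apply]
      have claim : ∀ n m, n ≤ m → ∀ z ∈ M, ⟪y n - y m, (V ^ m) z⟫_ℂ = 0 := by
        intro n m hnm
        induction m, hnm using Nat.le_induction with
        | base => intro z hz; simp
        | succ m hm ih =>
          intro z hz
          have h1 : y n - y (m + 1) = (y n - y m) + (V ^ m) (Wn m) := by
            rw [hstep m]; abel
          have h2 : (V ^ (m + 1)) z = (V ^ m) (V z) := by
            rw [pow_succ, ContinuousLinearMap.mul_apply]
          rw [h1, inner_add_left, h2, ih (V z) (hinv z hz), ← h2,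
            horth m (m + 1) (by omega) (Wn m) (hWnW m) z hz, add_zero]
      have hyorth : ∀ n m, n ≤ m → ⟪y n - y m, y m⟫_ℂ = 0 :=
        fun n m hnm => claim n m hnm _ (hXM m)
      have hnormy : ∀ n m, n ≤ m → ‖y n - y m‖ * ‖y n - y m‖ =
          ‖(xs n : H)‖ * ‖(xs n : H)‖ - ‖(xs m : H)‖ * ‖(xs m : H)‖ := by
        intro n m hnm
        have h1 := norm_add_sq_eq_norm_sq_add_norm_sq_of_inner_eq_zero
          (y n - y m) (y m) (hyorth n m hnm)
        rw [sub_add_cancel] at h1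
        have h2 : ‖y n‖ = ‖(xs n : H)‖ := hpownorm n _
        have h3 : ‖y m‖ = ‖(xs m : H)‖ := hpownorm m _
        rw [h2, h3] at h1
        linarith
      set a : ℕ → ℝ := fun n => ‖(xs n : H)‖ * ‖(xs n : H)‖ with hadef
      have haanti : Antitone a := by
        refine antitone_nat_of_succ_le fun n => ?_
        have h1 := hnormy n (n + 1) (by omega)
        show a (n + 1) ≤ a n
        simp only [hadef]
        nlinarith [norm_nonneg (y n - y (n + 1))]
      have hacauchy : CauchySeq a := by
        have hbdd : BddBelow (Set.range a) := by
          refine ⟨0, ?_⟩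
          rintro r ⟨n, rfl⟩
          positivity
        exact (tendsto_atTop_ciInf haanti hbdd).cauchySeq
      have hycauchy : CauchySeq y := by
        rw [Metric.cauchySeq_iff]
        intro ε hε
        obtain ⟨N, hN⟩ := Metric.cauchySeq_iff.mp hacauchy (ε * ε) (by positivity)
        refine ⟨N, fun m hm n hn => ?_⟩
        have key : ∀ p q, N ≤ p → N ≤ q → p ≤ q → dist (y p) (y q) < ε := by
          intro p q hp hq hpq
          have h1 := hnormy p q hpq
          have h2 := hN p hp q hq
          rw [Real.dist_eq] at h2
          simp only [hadef] at h2
          rw [dist_eq_norm]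
          have h3 : ‖y p - y q‖ * ‖y p - y q‖ < ε * ε := by
            nlinarith [le_abs_self (‖(xs p : H)‖ * ‖(xs p : H)‖ -
              ‖(xs q : H)‖ * ‖(xs q : H)‖)]
          nlinarith [norm_nonneg (y p - y q)]
        rcases le_total m n with h | h
        · exact key m n hm hn h
        · rw [dist_comm]; exact key n m hn hm h
      obtain ⟨l, hl⟩ := cauchySeq_tendsto_of_complete hycauchy
      have hxy : ∀ n, x - y n ∈ Msup := by
        intro n
        induction n with
        | zero =>
          have h0 : y 0 = x := by
            show (V ^ 0) ((xs 0 : H)) = x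
            simp only [pow_zero, ContinuousLinearMap.one_apply]
            rfl
          rw [h0, sub_self]
          exact zero_mem _
        | succ n ih =>
          have h1 : x - y (n + 1) = (x - y n) + (V ^ n) (Wn n) := by
            rw [hstep n]; abel
          rw [h1]
          exact add_mem ih (le_iSup (fun k : ℕ => W'.map ((V ^ k : H →L[ℂ] H) : H →ₗ[ℂ] H)) n
            (Submodule.mem_map.mpr ⟨Wn n, hWnW n, rfl⟩))
      have hl0 : l = 0 := by
        have hrange : ∀ n : ℕ, ∃ z, (V ^ n) z = l := by
          intro n
          have hiso : Isometry ((V ^ n : H →L[ℂ] H) : H → H) :=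
            AddMonoidHomClass.isometry_of_norm _ (hpownorm n)
          have hclosed : IsClosed (Set.range ((V ^ n : H →L[ℂ] H) : H → H)) :=
            hiso.isClosedEmbedding.isClosed_range
          have hmem : ∀ m, n ≤ m → y m ∈ Set.range ((V ^ n : H →L[ℂ] H) : H → H) := by
            intro m hm
            refine ⟨(V ^ (m - n)) ((xs m) : H), ?_⟩
            show (V ^ n) ((V ^ (m - n)) ((xs m) : H)) = (V ^ m) ((xs m) : H)
            rw [← ContinuousLinearMap.mul_apply, ← pow_add, Nat.add_sub_cancel' hm]
          exact hclosed.mem_of_tendsto hl (eventually_atTop.mpr ⟨n, hmem⟩)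
        have hPl : (fun n : ℕ => (V ^ n) ((ContinuousLinearMap.adjoint V ^ n) l))
            = fun _ => l := by
          funext n
          obtain ⟨z, rfl⟩ := hrange n
          rw [hadjpow]
        have h1 := hpure l
        rw [hPl] at h1
        exact tendsto_nhds_unique tendsto_const_nhds h1
      have hfin : Tendsto (fun n => x - y n) atTop (𝓝 x) := by
        have h1 : Tendsto (fun n : ℕ => x - y n) atTop (𝓝 (x - l)) :=
          tendsto_const_nhds.sub hl
        rw [hl0, sub_zero] at h1
        exact h1
      show x ∈ (Msup.topologicalClosure : Set H)
      rw [Submodule.topologicalClosure_coe]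
      exact mem_closure_of_tendsto hfin (Eventually.of_forall hxy)
    · -- pairwise orthogonality
      intro n m hnm w hw w' hw'
      rcases lt_or_gt_of_ne hnm with h | h
      · exact horth n m h w hw _ (hW'M hw')
      · rw [← inner_conj_symm, horth m n h w' hw' _ (hW'M hw), map_zero]
  · -- backward direction
    rintro ⟨hMeq, -⟩ x hx
    have hVsup : ∀ u ∈ Msup, V u ∈ Msup := by
      have : Msup ≤ Msup.comap (V : H →ₗ[ℂ] H) := by
        refine iSup_le fun n => ?_
        intro u hu
        rcases Submodule.mem_map.mp hu with ⟨ww, hww, rfl⟩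
        have h2 : V ((V ^ n) ww) = (V ^ (n + 1)) ww := by
          rw [pow_succ', ContinuousLinearMap.mul_apply]
        show V ((V ^ n) ww) ∈ Msup
        rw [h2]
        exact le_iSup (fun n : ℕ => W'.map ((V ^ n : H →L[ℂ] H) : H →ₗ[ℂ] H)) (n + 1)
          (Submodule.mem_map.mpr ⟨ww, hww, rfl⟩)
      intro u hu
      exact this hu
    rw [hMeq] at hx ⊢
    have hx' : x ∈ closure (Msup : Set H) := hx
    have : V x ∈ closure (Msup : Set H) :=
      map_mem_closure V.continuous hx' fun u hu => hVsup u hu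
    exact this
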